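/- Let a, b > 0 with a + b = 1, and let A, B ⊆ ℝⁿ be bounded measurable sets. Then vol(A)^a · vol(B)^b ≤ vol(aA + bB), where aA + bB = {a·x + b·y : x ∈ A, y ∈ B} and vol denotes Lebesgue (outer) measure. -/

import Mathlib

open MeasureTheory Set
open scoped ENNReal NNReal Pointwise

private lemma bm_amgm {a b : ℝ} (ha : 0 < a) (hb : 0 < b) (hab : a + b = 1)
    (x y : ℝ≥0∞) (hx : x ≠ ∞) (hy : y ≠ ∞) :
    x ^ a * y ^ b ≤ ENNReal.ofReal a * x + ENNReal.ofReal b * y := by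
  lift x to ℝ≥0 using hx
  lift y to ℝ≥0 using hy
  have h := NNReal.geom_mean_le_arith_mean2_weighted a.toNNReal b.toNNReal x y
    (by rw [← Real.toNNReal_add ha.le hb.le, hab]; simp)
  rw [← ENNReal.coe_rpow_of_nonneg _ ha.le, ← ENNReal.coe_rpow_of_nonneg _ hb.le,
    ← ENNReal.coe_mul, ENNReal.ofReal, ENNReal.ofReal, ← ENNReal.coe_mul, ← ENNReal.coe_mul,
    ← ENNReal.coe_add, ENNReal.coe_le_coe]
  simpa [Real.coe_toNNReal _ ha.le, Real.coe_toNNReal _ hb.le] using h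

/-- one-dimensional additive Brunn-Minkowski for bounded measurable nonempty sets. -/
private lemma bm_one_dim (F G : Set ℝ) (hFm : MeasurableSet F) (hGm : MeasurableSet G)
    (hFb : Bornology.IsBounded F) (hGb : Bornology.IsBounded G)
    (hFne : F.Nonempty) (hGne : G.Nonempty) :
    volume F + volume G ≤ volume (F + G) := by
  refine ENNReal.le_of_forall_pos_le_add fun ε hε _ => ?_
  have hFa : BddAbove F := hFb.bddAbove
  have hGb' : BddBelow G := hGb.bddBelow
  have hε' : (0:ℝ) < (ε:ℝ)/2 := by positivity
  obtain ⟨x, hxF, hx⟩ : ∃ x ∈ F, sSup F - (ε:ℝ)/2 < x :=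
    exists_lt_of_lt_csSup hFne (by linarith)
  obtain ⟨y, hyG, hy⟩ : ∃ y ∈ G, y < sInf G + (ε:ℝ)/2 :=
    exists_lt_of_csInf_lt hGne (by linarith)
  set U1 : Set ℝ := (· + y) '' (F ∩ Iic x) with hU1
  set U2 : Set ℝ := (x + ·) '' (G ∩ Ici y) with hU2
  have hU1m : MeasurableSet U1 := by
    rw [hU1, Set.image_add_right]
    exact (hFm.inter measurableSet_Iic).preimage (measurable_add_const _)
  have hU2m : MeasurableSet U2 := by
    rw [hU2, Set.image_add_left]
    exact (hGm.inter measurableSet_Ici).preimage (measurable_const_add _)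
  have hsub : U1 ∪ U2 ⊆ F + G := by
    rintro z (⟨u, ⟨huF, _⟩, rfl⟩ | ⟨v, ⟨hvG, _⟩, rfl⟩)
    · exact Set.add_mem_add huF hyG
    · exact Set.add_mem_add hxF hvG
  have hdisj : AEDisjoint volume U1 U2 := by
    have : U1 ∩ U2 ⊆ {x + y} := by
      rintro z ⟨⟨u, ⟨_, hu⟩, rfl⟩, ⟨v, ⟨_, hv⟩, hv'⟩⟩
      simp only [Set.mem_Iic] at hu
      simp only [Set.mem_Ici] at hv
      simp only [Set.mem_singleton_iff]
      simp only at hv'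
      linarith
    exact measure_mono_null this (measure_singleton _)
  have hvol1 : volume F ≤ volume U1 + ENNReal.ofReal ((ε:ℝ)/2) := by
    have : F ⊆ (F ∩ Iic x) ∪ Ioc x (sSup F) := by
      intro u hu
      rcases le_or_gt u x with h | h
      · exact Or.inl ⟨hu, h⟩
      · exact Or.inr ⟨h, le_csSup hFa hu⟩
    calc volume F ≤ volume (F ∩ Iic x) + volume (Ioc x (sSup F)) :=
          le_trans (measure_mono this) (measure_union_le _ _)
      _ ≤ volume U1 + ENNReal.ofReal ((ε:ℝ)/2) := by
          have h1 : volume U1 = volume (F ∩ Iic x) := by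
            rw [hU1, Set.image_add_right, measure_preimage_add_right]
          rw [h1, Real.volume_Ioc]
          gcongr
          linarith
  have hvol2 : volume G ≤ volume U2 + ENNReal.ofReal ((ε:ℝ)/2) := by
    have : G ⊆ (G ∩ Ici y) ∪ Ico (sInf G) y := by
      intro v hv
      rcases le_or_gt y v with h | h
      · exact Or.inl ⟨hv, h⟩
      · exact Or.inr ⟨csInf_le hGb' hv, h⟩
    calc volume G ≤ volume (G ∩ Ici y) + volume (Ico (sInf G) y) :=
          le_trans (measure_mono this) (measure_union_le _ _)
      _ ≤ volume U2 + ENNReal.ofReal ((ε:ℝ)/2) := by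
          have h2 : volume U2 = volume (G ∩ Ici y) := by
            rw [hU2, Set.image_add_left, measure_preimage_add]
          rw [h2, Real.volume_Ico]
          gcongr
          linarith
  have hkey : volume U1 + volume U2 ≤ volume (F + G) := by
    rw [← measure_union₀ hU2m.nullMeasurableSet hdisj]
    exact measure_mono hsub
  have hε2 : ENNReal.ofReal ((ε:ℝ)/2) + ENNReal.ofReal ((ε:ℝ)/2) = (ε : ℝ≥0∞) := by
    rw [← ENNReal.ofReal_add (by positivity) (by positivity),
      show (ε:ℝ)/2 + (ε:ℝ)/2 = (ε:ℝ) by ring, ENNReal.ofReal_coe_nnreal]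
  calc volume F + volume G
      ≤ (volume U1 + volume U2) + (ENNReal.ofReal ((ε:ℝ)/2) + ENNReal.ofReal ((ε:ℝ)/2)) := by
        calc volume F + volume G ≤ (volume U1 + ENNReal.ofReal ((ε:ℝ)/2)) +
              (volume U2 + ENNReal.ofReal ((ε:ℝ)/2)) := add_le_add hvol1 hvol2
          _ = _ := by ring
    _ ≤ volume (F + G) + ε := by rw [hε2]; exact add_le_add hkey le_rfl


private lemma bm_layer (φ : ℝ → ℝ≥0∞) (hφ : Measurable φ) :
    ∫⁻ l in Set.Ioo (0:ℝ) 1, volume {t : ℝ | ENNReal.ofReal l < φ t} =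
      ∫⁻ t, min (φ t) 1 := by
  have hmble : Measurable fun p : ℝ × ℝ =>
      ({(l, t) : ℝ × ℝ | ENNReal.ofReal l < φ t}).indicator (fun _ => (1:ℝ≥0∞)) p := by
    refine Measurable.indicator measurable_const ?_
    exact measurableSet_lt (ENNReal.measurable_ofReal.comp measurable_fst)
      (hφ.comp measurable_snd)
  have swap := lintegral_lintegral_swap (μ := volume.restrict (Set.Ioo (0:ℝ) 1))
    (ν := (volume : Measure ℝ))
    (f := fun l t => ({(l, t) : ℝ × ℝ | ENNReal.ofReal l < φ t}).indicator
      (fun _ => (1:ℝ≥0∞)) (l, t)) hmble.aemeasurable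
  have lhs_eq : ∀ l : ℝ, (∫⁻ t, ({(l, t) : ℝ × ℝ | ENNReal.ofReal l < φ t}).indicator
      (fun _ => (1:ℝ≥0∞)) (l, t)) = volume {t : ℝ | ENNReal.ofReal l < φ t} := by
    intro l
    have : ∀ t : ℝ, ({(l, t) : ℝ × ℝ | ENNReal.ofReal l < φ t}).indicator
        (fun _ => (1:ℝ≥0∞)) (l, t) = ({t : ℝ | ENNReal.ofReal l < φ t}).indicator
        (fun _ => (1:ℝ≥0∞)) t := by
      intro t
      by_cases h : ENNReal.ofReal l < φ t <;> simp [Set.indicator, h]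
    calc (∫⁻ t, ({(l, t) : ℝ × ℝ | ENNReal.ofReal l < φ t}).indicator
          (fun _ => (1:ℝ≥0∞)) (l, t))
        = ∫⁻ t, ({t : ℝ | ENNReal.ofReal l < φ t}).indicator (fun _ => (1:ℝ≥0∞)) t :=
          lintegral_congr this
      _ = volume {t : ℝ | ENNReal.ofReal l < φ t} :=
          lintegral_indicator_one (measurableSet_lt measurable_const hφ)
  have rhs_eq : ∀ t : ℝ, (∫⁻ l in Set.Ioo (0:ℝ) 1,
      ({(l, t) : ℝ × ℝ | ENNReal.ofReal l < φ t}).indicator (fun _ => (1:ℝ≥0∞)) (l, t))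
      = min (φ t) 1 := by
    intro t
    have h1 : ∀ l : ℝ, ({(l, t) : ℝ × ℝ | ENNReal.ofReal l < φ t}).indicator
        (fun _ => (1:ℝ≥0∞)) (l, t) = ({l : ℝ | ENNReal.ofReal l < φ t}).indicator
        (fun _ => (1:ℝ≥0∞)) l := by
      intro l; by_cases h : ENNReal.ofReal l < φ t <;> simp [Set.indicator, h]
    have step : (∫⁻ l in Set.Ioo (0:ℝ) 1,
        ({(l, t) : ℝ × ℝ | ENNReal.ofReal l < φ t}).indicator (fun _ => (1:ℝ≥0∞)) (l, t))
        = volume ({l : ℝ | ENNReal.ofReal l < φ t} ∩ Set.Ioo 0 1) := by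
      calc (∫⁻ l in Set.Ioo (0:ℝ) 1,
          ({(l, t) : ℝ × ℝ | ENNReal.ofReal l < φ t}).indicator (fun _ => (1:ℝ≥0∞)) (l, t))
          = ∫⁻ l in Set.Ioo (0:ℝ) 1,
            ({l : ℝ | ENNReal.ofReal l < φ t}).indicator (fun _ => (1:ℝ≥0∞)) l :=
            lintegral_congr h1
        _ = (volume.restrict (Set.Ioo (0:ℝ) 1)) {l : ℝ | ENNReal.ofReal l < φ t} :=
            lintegral_indicator_one (measurableSet_lt ENNReal.measurable_ofReal measurable_const)
        _ = volume ({l : ℝ | ENNReal.ofReal l < φ t} ∩ Set.Ioo 0 1) :=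
            Measure.restrict_apply (measurableSet_lt ENNReal.measurable_ofReal measurable_const)
    rw [step]
    rcases le_or_gt 1 (φ t) with h | h
    · have : {l : ℝ | ENNReal.ofReal l < φ t} ∩ Set.Ioo 0 1 = Set.Ioo 0 1 := by
        refine Set.inter_eq_self_of_subset_right fun l hl => ?_
        exact lt_of_lt_of_le (by simpa using ENNReal.ofReal_lt_one.2 hl.2) h
      rw [this, Real.volume_Ioo, min_eq_right h]
      norm_num
    · have hne : φ t ≠ ∞ := (h.trans ENNReal.one_lt_top).ne
      have : {l : ℝ | ENNReal.ofReal l < φ t} ∩ Set.Ioo 0 1 = Set.Ioo 0 ((φ t).toReal) := by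
        ext l
        simp only [Set.mem_inter_iff, Set.mem_setOf_eq, Set.mem_Ioo]
        constructor
        · rintro ⟨hl, hl0, _⟩
          exact ⟨hl0, (ENNReal.ofReal_lt_iff_lt_toReal hl0.le hne).1 hl⟩
        · rintro ⟨hl0, hl⟩
          have ht1 : (φ t).toReal < 1 := by
            rw [← ENNReal.toReal_one]
            exact ENNReal.toReal_strict_mono ENNReal.one_ne_top h
          exact ⟨(ENNReal.ofReal_lt_iff_lt_toReal hl0.le hne).2 hl, hl0, hl.trans ht1⟩
      rw [this, Real.volume_Ioo, min_eq_left h.le]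
      simp [ENNReal.ofReal_toReal hne]
  calc ∫⁻ l in Set.Ioo (0:ℝ) 1, volume {t : ℝ | ENNReal.ofReal l < φ t}
      = ∫⁻ l in Set.Ioo (0:ℝ) 1, ∫⁻ t, ({(l, t) : ℝ × ℝ | ENNReal.ofReal l < φ t}).indicator
        (fun _ => (1:ℝ≥0∞)) (l, t) := by
        refine lintegral_congr fun l => (lhs_eq l).symm
    _ = ∫⁻ t, ∫⁻ l in Set.Ioo (0:ℝ) 1, ({(l, t) : ℝ × ℝ | ENNReal.ofReal l < φ t}).indicator
        (fun _ => (1:ℝ≥0∞)) (l, t) := swap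
    _ = ∫⁻ t, min (φ t) 1 := lintegral_congr fun t => rhs_eq t


private lemma bm_dmd {x y u v : ℝ≥0∞} (hu0 : u ≠ 0) (huT : u ≠ ∞) (hv0 : v ≠ 0) (hvT : v ≠ ∞) :
    x / u * (y / v) = x * y / (u * v) := by
  rw [div_eq_mul_inv, div_eq_mul_inv, div_eq_mul_inv,
    ENNReal.mul_inv (Or.inl hu0) (Or.inl huT)]
  ring

private lemma bm_pl_one_dim {a b : ℝ} (ha : 0 < a) (hb : 0 < b) (hab : a + b = 1)
    (f g h : ℝ → ℝ≥0∞) (hf : Measurable f) (hg : Measurable g) (hh : Measurable h)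
    (K : ℝ≥0∞) (hK : K ≠ ∞) (hfK : ∀ r, f r ≤ K) (hgK : ∀ s, g s ≤ K)
    (R : ℝ) (hfS : ∀ r, r ∉ Metric.closedBall (0:ℝ) R → f r = 0)
    (hgS : ∀ s, s ∉ Metric.closedBall (0:ℝ) R → g s = 0)
    (hyp : ∀ r s, f r ^ a * g s ^ b ≤ h (a * r + b * s)) :
    (∫⁻ r, f r) ^ a * (∫⁻ s, g s) ^ b ≤ ∫⁻ t, h t := by
  set M := ⨆ r, f r with hM
  set N := ⨆ s, g s with hN
  have hMK : M ≤ K := iSup_le hfK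
  have hNK : N ≤ K := iSup_le hgK
  have hMT : M ≠ ∞ := (lt_of_le_of_lt hMK hK.lt_top).ne
  have hNT : N ≠ ∞ := (lt_of_le_of_lt hNK hK.lt_top).ne
  by_cases hM0 : M = 0
  · have : ∀ r, f r = 0 := fun r => le_antisymm (hM0 ▸ le_iSup f r) (zero_le)
    rw [lintegral_congr this, lintegral_zero, ENNReal.zero_rpow_of_pos ha, zero_mul]
    exact zero_le
  by_cases hN0 : N = 0
  · have : ∀ s, g s = 0 := fun s => le_antisymm (hN0 ▸ le_iSup g s) (zero_le)
    rw [lintegral_congr this, lintegral_zero, ENNReal.zero_rpow_of_pos hb, mul_zero]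
    exact zero_le
  -- normalized functions
  set D := M ^ a * N ^ b with hD
  have hMa0 : M ^ a ≠ 0 := (ENNReal.rpow_pos (pos_iff_ne_zero.2 hM0) hMT).ne'
  have hMaT : M ^ a ≠ ∞ := ENNReal.rpow_ne_top_of_nonneg ha.le hMT
  have hNb0 : N ^ b ≠ 0 := (ENNReal.rpow_pos (pos_iff_ne_zero.2 hN0) hNT).ne'
  have hNbT : N ^ b ≠ ∞ := ENNReal.rpow_ne_top_of_nonneg hb.le hNT
  have hD0 : D ≠ 0 := mul_ne_zero hMa0 hNb0
  have hDT : D ≠ ∞ := ENNReal.mul_ne_top hMaT hNbT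
  set f' := fun r => f r / M with hf'
  set g' := fun s => g s / N with hg'
  set h' := fun t => h t / D with hh'
  have hf'm : Measurable f' := hf.div_const M
  have hg'm : Measurable g' := hg.div_const N
  have hh'm : Measurable h' := hh.div_const D
  have hf'le : ∀ r, f' r ≤ 1 := fun r =>
    ENNReal.div_le_of_le_mul (by rw [one_mul]; exact le_iSup f r)
  have hg'le : ∀ s, g' s ≤ 1 := fun s =>
    ENNReal.div_le_of_le_mul (by rw [one_mul]; exact le_iSup g s)
  have hf'sup : (⨆ r, f' r) = 1 := by
    rw [hf']
    simp only [← ENNReal.iSup_div, ← hM]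
    exact ENNReal.div_self hM0 hMT
  have hg'sup : (⨆ s, g' s) = 1 := by
    rw [hg']
    simp only [← ENNReal.iSup_div, ← hN]
    exact ENNReal.div_self hN0 hNT
  have hyp' : ∀ r s, f' r ^ a * g' s ^ b ≤ h' (a * r + b * s) := by
    intro r s
    have : f' r ^ a * g' s ^ b = f r ^ a * g s ^ b / D := by
      rw [hf', hg', ENNReal.div_rpow_of_nonneg _ _ ha.le, ENNReal.div_rpow_of_nonneg _ _ hb.le,
        bm_dmd hMa0 hMaT hNb0 hNbT]
    rw [this]
    exact ENNReal.div_le_div_right (hyp r s) D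
  -- level sets
  set P := fun l : ℝ => volume {r : ℝ | ENNReal.ofReal l < f' r} with hP
  set Q := fun l : ℝ => volume {s : ℝ | ENNReal.ofReal l < g' s} with hQ
  have hPm : Measurable P := by
    apply Antitone.measurable
    intro l1 l2 hl
    exact measure_mono fun r hr => lt_of_le_of_lt (ENNReal.ofReal_le_ofReal hl) hr
  have hQm : Measurable Q := by
    apply Antitone.measurable
    intro l1 l2 hl
    exact measure_mono fun s hs => lt_of_le_of_lt (ENNReal.ofReal_le_ofReal hl) hs
  -- key pointwise estimate on level sets
  have key : ∀ l ∈ Set.Ioo (0:ℝ) 1,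
      ENNReal.ofReal a * P l + ENNReal.ofReal b * Q l ≤
        volume {t : ℝ | ENNReal.ofReal l < h' t} := by
    rintro l ⟨hl0, hl1⟩
    set F := {r : ℝ | ENNReal.ofReal l < f' r} with hF
    set G := {s : ℝ | ENNReal.ofReal l < g' s} with hG
    have hlne : ENNReal.ofReal l ≠ 0 := by simpa using ENNReal.ofReal_pos.2 hl0
    have hFm : MeasurableSet F := measurableSet_lt measurable_const hf'm
    have hGm : MeasurableSet G := measurableSet_lt measurable_const hg'm
    have hFS : F ⊆ Metric.closedBall (0:ℝ) R := by
      intro r hr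
      by_contra hrS
      have h0 : f' r = 0 := by simp [hf', hfS r hrS]
      rw [hF, Set.mem_setOf_eq, h0] at hr
      exact (not_lt.2 (zero_le)) hr
    have hGS : G ⊆ Metric.closedBall (0:ℝ) R := by
      intro s hs
      by_contra hsS
      have h0 : g' s = 0 := by simp [hg', hgS s hsS]
      rw [hG, Set.mem_setOf_eq, h0] at hs
      exact (not_lt.2 (zero_le)) hs
    have hFb : Bornology.IsBounded F := Metric.isBounded_closedBall.subset hFS
    have hGb : Bornology.IsBounded G := Metric.isBounded_closedBall.subset hGS
    have hFne : F.Nonempty := by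
      have : ENNReal.ofReal l < ⨆ r, f' r := by
        rw [hf'sup]; exact ENNReal.ofReal_lt_one.2 hl1
      obtain ⟨r, hr⟩ := lt_iSup_iff.1 this
      exact ⟨r, hr⟩
    have hGne : G.Nonempty := by
      have : ENNReal.ofReal l < ⨆ s, g' s := by
        rw [hg'sup]; exact ENNReal.ofReal_lt_one.2 hl1
      obtain ⟨s, hs⟩ := lt_iSup_iff.1 this
      exact ⟨s, hs⟩
    have hsub : (a • F + b • G : Set ℝ) ⊆ {t : ℝ | ENNReal.ofReal l < h' t} := by
      rintro z ⟨u, ⟨x, hx, rfl⟩, v, ⟨y, hy, rfl⟩, rfl⟩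
      simp only [smul_eq_mul, Set.mem_setOf_eq]
      have h1 : ENNReal.ofReal l ^ a < f' x ^ a := ENNReal.rpow_lt_rpow hx ha
      have h2 : ENNReal.ofReal l ^ b < g' y ^ b := ENNReal.rpow_lt_rpow hy hb
      calc ENNReal.ofReal l = ENNReal.ofReal l ^ (a + b) := by rw [hab, ENNReal.rpow_one]
        _ = ENNReal.ofReal l ^ a * ENNReal.ofReal l ^ b :=
            ENNReal.rpow_add a b hlne ENNReal.ofReal_ne_top
        _ < f' x ^ a * g' y ^ b := ENNReal.mul_lt_mul h1 h2
        _ ≤ h' (a * x + b * y) := hyp' x y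
    have hsmulF : MeasurableSet (a • F : Set ℝ) := hFm.const_smul₀ a
    have hsmulG : MeasurableSet (b • G : Set ℝ) := hGm.const_smul₀ b
    have hvolF : volume (a • F : Set ℝ) = ENNReal.ofReal a * volume F := by
      rw [Measure.addHaar_smul_of_nonneg volume ha.le F]
      simp
    have hvolG : volume (b • G : Set ℝ) = ENNReal.ofReal b * volume G := by
      rw [Measure.addHaar_smul_of_nonneg volume hb.le G]
      simp
    calc ENNReal.ofReal a * P l + ENNReal.ofReal b * Q l
        = volume (a • F : Set ℝ) + volume (b • G : Set ℝ) := by rw [hvolF, hvolG]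
      _ ≤ volume (a • F + b • G : Set ℝ) :=
          bm_one_dim _ _ hsmulF hsmulG (hFb.smul₀ a) (hGb.smul₀ b)
            (hFne.smul_set) (hGne.smul_set)
      _ ≤ volume {t : ℝ | ENNReal.ofReal l < h' t} := measure_mono hsub
  -- integrate the estimate
  have main : ENNReal.ofReal a * (∫⁻ r, f' r) + ENNReal.ofReal b * (∫⁻ s, g' s) ≤ ∫⁻ t, h' t := by
    have e1 : ∫⁻ l in Set.Ioo (0:ℝ) 1, P l = ∫⁻ r, f' r := by
      rw [hP, bm_layer f' hf'm]
      exact lintegral_congr fun r => min_eq_left (hf'le r)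
    have e2 : ∫⁻ l in Set.Ioo (0:ℝ) 1, Q l = ∫⁻ s, g' s := by
      rw [hQ, bm_layer g' hg'm]
      exact lintegral_congr fun s => min_eq_left (hg'le s)
    calc ENNReal.ofReal a * (∫⁻ r, f' r) + ENNReal.ofReal b * (∫⁻ s, g' s)
        = ∫⁻ l in Set.Ioo (0:ℝ) 1, (ENNReal.ofReal a * P l + ENNReal.ofReal b * Q l) := by
          rw [lintegral_add_left (hPm.const_mul _), lintegral_const_mul _ hPm,
            lintegral_const_mul _ hQm, e1, e2]
      _ ≤ ∫⁻ l in Set.Ioo (0:ℝ) 1, volume {t : ℝ | ENNReal.ofReal l < h' t} := by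
          refine setLIntegral_mono ?_ key
          apply Antitone.measurable
          intro l1 l2 hl
          exact measure_mono fun t ht => lt_of_le_of_lt (ENNReal.ofReal_le_ofReal hl) ht
      _ = ∫⁻ t, min (h' t) 1 := bm_layer h' hh'm
      _ ≤ ∫⁻ t, h' t := lintegral_mono fun t => min_le_left _ _
  -- finiteness of normalized integrals
  have hIf : (∫⁻ r, f' r) ≠ ∞ := by
    have : (∫⁻ r, f' r) ≤ volume (Metric.closedBall (0:ℝ) R) := by
      rw [← lintegral_indicator_one Metric.isClosed_closedBall.measurableSet]
      refine lintegral_mono fun r => ?_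
      by_cases hr : r ∈ Metric.closedBall (0:ℝ) R
      · simpa [Set.indicator, hr] using hf'le r
      · simp [Set.indicator, hr, hf', hfS r hr]
    exact (lt_of_le_of_lt this Metric.isBounded_closedBall.measure_lt_top).ne
  have hIg : (∫⁻ s, g' s) ≠ ∞ := by
    have : (∫⁻ s, g' s) ≤ volume (Metric.closedBall (0:ℝ) R) := by
      rw [← lintegral_indicator_one Metric.isClosed_closedBall.measurableSet]
      refine lintegral_mono fun s => ?_
      by_cases hs : s ∈ Metric.closedBall (0:ℝ) R
      · simpa [Set.indicator, hs] using hg'le s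
      · simp [Set.indicator, hs, hg', hgS s hs]
    exact (lt_of_le_of_lt this Metric.isBounded_closedBall.measure_lt_top).ne
  have amgm : (∫⁻ r, f' r) ^ a * (∫⁻ s, g' s) ^ b ≤ ∫⁻ t, h' t :=
    le_trans (bm_amgm ha hb hab _ _ hIf hIg) main
  -- unnormalize
  have ef : (∫⁻ r, f' r) = (∫⁻ r, f r) / M := by
    simp only [hf', div_eq_mul_inv]
    exact lintegral_mul_const _ hf
  have eg : (∫⁻ s, g' s) = (∫⁻ s, g s) / N := by
    simp only [hg', div_eq_mul_inv]
    exact lintegral_mul_const _ hg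
  have eh : (∫⁻ t, h' t) = (∫⁻ t, h t) / D := by
    simp only [hh', div_eq_mul_inv]
    exact lintegral_mul_const _ hh
  rw [ef, eg, eh] at amgm
  have lhs_eq : ((∫⁻ r, f r) / M) ^ a * ((∫⁻ s, g s) / N) ^ b =
      (∫⁻ r, f r) ^ a * (∫⁻ s, g s) ^ b / D := by
    rw [ENNReal.div_rpow_of_nonneg _ _ ha.le, ENNReal.div_rpow_of_nonneg _ _ hb.le,
      bm_dmd hMa0 hMaT hNb0 hNbT]
  rw [lhs_eq] at amgm
  calc (∫⁻ r, f r) ^ a * (∫⁻ s, g s) ^ b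
      = (∫⁻ r, f r) ^ a * (∫⁻ s, g s) ^ b / D * D := (ENNReal.div_mul_cancel hD0 hDT).symm
    _ ≤ (∫⁻ t, h t) / D * D := mul_le_mul_left amgm D
    _ = ∫⁻ t, h t := ENNReal.div_mul_cancel hD0 hDT
private lemma bm_step {n : ℕ} {a b : ℝ} (ha : 0 < a) (hb : 0 < b) (hab : a + b = 1)
    (IH : ∀ A B : Set (Fin n → ℝ), Bornology.IsBounded A → Bornology.IsBounded B →
      MeasurableSet A → MeasurableSet B →
      volume A ^ a * volume B ^ b ≤ volume (a • A + b • B))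
    (A B : Set (ℝ × (Fin n → ℝ))) (hAb : Bornology.IsBounded A) (hBb : Bornology.IsBounded B)
    (hAm : MeasurableSet A) (hBm : MeasurableSet B) :
    volume A ^ a * volume B ^ b ≤ volume (a • A + b • B) := by
  set C := a • A + b • B with hC
  have hCb : Bornology.IsBounded C := (hAb.smul₀ a).add (hBb.smul₀ b)
  obtain ⟨R, hR⟩ := ((hAb.union hBb).union hCb).subset_closedBall (0 : ℝ × (Fin n → ℝ))
  set I := Metric.closedBall (0:ℝ) R with hI
  set W := Metric.closedBall (0 : Fin n → ℝ) R with hW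
  have hIW : Metric.closedBall (0 : ℝ × (Fin n → ℝ)) R = I ×ˢ W := by
    rw [hI, hW, closedBall_prod_same]
    rfl
  rw [hIW] at hR
  have hA_sub : A ⊆ I ×ˢ W := fun x hx => hR (Or.inl (Or.inl hx))
  have hB_sub : B ⊆ I ×ˢ W := fun x hx => hR (Or.inl (Or.inr hx))
  have hC_sub : C ⊆ I ×ˢ W := fun x hx => hR (Or.inr hx)
  set U := toMeasurable volume C ∩ (I ×ˢ W) with hU
  have hUm : MeasurableSet U :=
    (measurableSet_toMeasurable volume C).inter
      (Metric.isClosed_closedBall.measurableSet.prod Metric.isClosed_closedBall.measurableSet)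
  have hCU : C ⊆ U := Set.subset_inter (subset_toMeasurable volume C) hC_sub
  have hUvol : volume U = volume C := le_antisymm
    (le_trans (measure_mono Set.inter_subset_left) (measure_toMeasurable C).le)
    (measure_mono hCU)
  set f := fun r : ℝ => volume (Prod.mk r ⁻¹' A) with hf
  set g := fun s : ℝ => volume (Prod.mk s ⁻¹' B) with hg
  set h := fun t : ℝ => volume (Prod.mk t ⁻¹' U) with hh
  have hfm : Measurable f := measurable_measure_prodMk_left hAm
  have hgm : Measurable g := measurable_measure_prodMk_left hBm
  have hhm : Measurable h := measurable_measure_prodMk_left hUm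
  have hKW : volume W ≠ ∞ := Metric.isBounded_closedBall.measure_lt_top.ne
  have hfK : ∀ r, f r ≤ volume W := fun r =>
    measure_mono fun x hx => (hA_sub hx).2
  have hgK : ∀ s, g s ≤ volume W := fun s =>
    measure_mono fun x hx => (hB_sub hx).2
  have hfS : ∀ r, r ∉ I → f r = 0 := by
    intro r hr
    have : Prod.mk r ⁻¹' A = ∅ := by
      ext x
      simp only [Set.mem_preimage, Set.mem_empty_iff_false, iff_false]
      exact fun hx => hr (hA_sub hx).1
    rw [hf]; simp only [this, measure_empty]
  have hgS : ∀ s, s ∉ I → g s = 0 := by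
    intro s hs
    have : Prod.mk s ⁻¹' B = ∅ := by
      ext x
      simp only [Set.mem_preimage, Set.mem_empty_iff_false, iff_false]
      exact fun hx => hs (hB_sub hx).1
    rw [hg]; simp only [this, measure_empty]
  have hyp : ∀ r s, f r ^ a * g s ^ b ≤ h (a * r + b * s) := by
    intro r s
    set Ar := Prod.mk r ⁻¹' A with hAr
    set Bs := Prod.mk s ⁻¹' B with hBs
    have hArm : MeasurableSet Ar := measurable_prodMk_left hAm
    have hBsm : MeasurableSet Bs := measurable_prodMk_left hBm
    have hArb : Bornology.IsBounded Ar :=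
      Metric.isBounded_closedBall.subset fun x hx => (hA_sub hx).2
    have hBsb : Bornology.IsBounded Bs :=
      Metric.isBounded_closedBall.subset fun x hx => (hB_sub hx).2
    refine le_trans (IH Ar Bs hArb hBsb hArm hBsm) ?_
    refine measure_mono ?_
    rintro z ⟨u, ⟨x, hx, rfl⟩, v, ⟨y, hy, rfl⟩, rfl⟩
    show (a * r + b * s, a • x + b • y) ∈ U
    apply hCU
    have : ((a * r + b * s : ℝ), a • x + b • y) = a • ((r, x) : ℝ × (Fin n → ℝ)) + b • (s, y) := by
      simp [Prod.ext_iff, smul_eq_mul]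
    rw [hC, this]
    exact Set.add_mem_add (Set.smul_mem_smul_set hx) (Set.smul_mem_smul_set hy)
  have intf : ∫⁻ r, f r = volume A := by
    rw [hf, Measure.volume_eq_prod, Measure.prod_apply hAm]
  have intg : ∫⁻ s, g s = volume B := by
    rw [hg, Measure.volume_eq_prod, Measure.prod_apply hBm]
  have inth : ∫⁻ t, h t = volume C := by
    rw [← hUvol, Measure.volume_eq_prod, Measure.prod_apply hUm]
  calc volume A ^ a * volume B ^ b = (∫⁻ r, f r) ^ a * (∫⁻ s, g s) ^ b := by rw [intf, intg]
    _ ≤ ∫⁻ t, h t :=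
        bm_pl_one_dim ha hb hab f g h hfm hgm hhm (volume W) hKW hfK hgK R hfS hgS hyp
    _ = volume C := inth

theorem brunn_minkowski_multiplicative (n : ℕ) (a b : ℝ) (ha : 0 < a) (hb : 0 < b)
    (hab : a + b = 1) (A B : Set (Fin n → ℝ))
    (hAb : Bornology.IsBounded A) (hBb : Bornology.IsBounded B)
    (hAm : MeasurableSet A) (hBm : MeasurableSet B) :
    volume A ^ a * volume B ^ b ≤ volume (a • A + b • B) := by
  induction n with
  | zero =>
    rcases A.eq_empty_or_nonempty with rfl | hAne
    · rw [measure_empty, ENNReal.zero_rpow_of_pos ha, zero_mul]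
      exact zero_le
    rcases B.eq_empty_or_nonempty with rfl | hBne
    · rw [measure_empty, ENNReal.zero_rpow_of_pos hb, mul_zero]
      exact zero_le
    have hsub : Subsingleton (Fin 0 → ℝ) := ⟨fun x y => funext fun i => i.elim0⟩
    have hAuniv : A = Set.univ := Subsingleton.eq_univ_of_nonempty hAne
    have hCuniv : (a • A + b • B : Set (Fin 0 → ℝ)) = Set.univ :=
      Subsingleton.eq_univ_of_nonempty ((hAne.smul_set).add (hBne.smul_set))
    have hBuniv : B = Set.univ := Subsingleton.eq_univ_of_nonempty hBne
    have huniv : volume (Set.univ : Set (Fin 0 → ℝ)) = 1 := by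
      rw [MeasureTheory.volume_pi, Measure.pi_univ]
      simp
    rw [hCuniv, hAuniv, hBuniv, huniv, ENNReal.one_rpow, ENNReal.one_rpow, one_mul]
  | succ n IH =>
    set e := MeasurableEquiv.piFinSuccAbove (fun _ : Fin (n+1) => ℝ) 0 with he
    have vp := volume_preserving_piFinSuccAbove (fun _ : Fin (n+1) => ℝ) 0
    have hvol : ∀ S : Set (Fin (n+1) → ℝ), volume (e '' S) = volume S := by
      intro S
      calc volume (e '' S) = volume (e.symm ⁻¹' S) := by
            rw [MeasurableEquiv.image_eq_preimage_symm]
        _ = (volume.map e.symm) S := (e.symm.map_apply S).symm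
        _ = volume S := by rw [(MeasurePreserving.symm e vp).map_eq]
    have he_smul : ∀ (c : ℝ) (x : Fin (n+1) → ℝ), e (c • x) = c • e x := by
      intro c x
      simp [he, MeasurableEquiv.piFinSuccAbove, Fin.insertNthEquiv, Fin.removeNth,
        Prod.ext_iff]
      rfl
    have he_add : ∀ x y : Fin (n+1) → ℝ, e (x + y) = e x + e y := by
      intro x y
      simp [he, MeasurableEquiv.piFinSuccAbove, Fin.insertNthEquiv, Fin.removeNth,
        Prod.ext_iff]
      rfl
    have himg_smul : ∀ (c : ℝ) (S : Set (Fin (n+1) → ℝ)), e '' (c • S) = c • (e '' S) := by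
      intro c S
      rw [← Set.image_smul, ← Set.image_smul, ← Set.image_comp, ← Set.image_comp]
      exact Set.image_congr fun x _ => he_smul c x
    have himg_add : ∀ S T : Set (Fin (n+1) → ℝ), e '' (S + T) = e '' S + e '' T := by
      intro S T
      ext z
      constructor
      · rintro ⟨w, ⟨u, hu, v, hv, rfl⟩, rfl⟩
        exact ⟨e u, Set.mem_image_of_mem e hu, e v, Set.mem_image_of_mem e hv,
          (he_add u v).symm⟩
      · rintro ⟨_, ⟨u, hu, rfl⟩, _, ⟨v, hv, rfl⟩, rfl⟩
        exact ⟨u + v, Set.add_mem_add hu hv, he_add u v⟩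
    have hbdd : ∀ S : Set (Fin (n+1) → ℝ), Bornology.IsBounded S →
        Bornology.IsBounded (e '' S) := by
      intro S hS
      obtain ⟨r, hr⟩ := hS.subset_closedBall 0
      refine Metric.isBounded_closedBall.subset (?_ : e '' S ⊆ Metric.closedBall 0 r)
      rintro _ ⟨x, hx, rfl⟩
      have hxr : ‖x‖ ≤ r := by
        have := hr hx
        rwa [Metric.mem_closedBall, dist_zero_right] at this
      rw [Metric.mem_closedBall, dist_zero_right]
      refine le_trans ?_ hxr
      have h1 : ‖(e x).1‖ ≤ ‖x‖ := norm_le_pi_norm x 0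
      have h2 : ‖(e x).2‖ ≤ ‖x‖ := by
        refine (pi_norm_le_iff_of_nonneg (norm_nonneg x)).2 fun j => ?_
        exact norm_le_pi_norm x _
      calc ‖e x‖ = max ‖(e x).1‖ ‖(e x).2‖ := rfl
        _ ≤ ‖x‖ := max_le h1 h2
    have hmeas : ∀ S : Set (Fin (n+1) → ℝ), MeasurableSet S → MeasurableSet (e '' S) := by
      intro S hS
      rw [MeasurableEquiv.image_eq_preimage_symm]
      exact hS.preimage e.symm.measurable
    have step := bm_step ha hb hab
      (fun A' B' hA'b hB'b hA'm hB'm => IH A' B' hA'b hB'b hA'm hB'm)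
      (e '' A) (e '' B) (hbdd A hAb) (hbdd B hBb) (hmeas A hAm) (hmeas B hBm)
    rw [hvol A, hvol B] at step
    refine le_trans step ?_
    rw [← himg_smul, ← himg_smul, ← himg_add, hvol]
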